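/- Let φ : (a,∞) → ℝ be C¹ strictly increasing with φ unbounded above and e^{−φ} ∈ L¹((h,∞)), and let u be the maximal solution of u''=φ'(u)(1+(u')²), u(0)=h, u'(0)=0, with maximal interval (−Λ_h,Λ_h), Λ_h < ∞. Then the half-period satisfies the explicit formula Λ_h = ∫_h^∞ (e^{2(φ(λ)−φ(h))} − 1)^{−1/2} dλ. -/

import Mathlib

open Set Filter Real
open MeasureTheory Topology

noncomputable section
def rr (φ : ℝ → ℝ) (h l : ℝ) : ℝ := Real.sqrt (Real.exp (2 * (φ l - φ h)) - 1)
def gg (φ : ℝ → ℝ) (h l : ℝ) : ℝ := (rr φ h l)⁻¹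
def GG (φ : ℝ → ℝ) (h l : ℝ) : ℝ := ∫ s in Set.Ioc h l, gg φ h s
end

variable {a h l ε : ℝ} {φ φ' : ℝ → ℝ}

lemma rr_nonneg : 0 ≤ rr φ h l := Real.sqrt_nonneg _
lemma gg_nonneg : 0 ≤ gg φ h l := inv_nonneg.2 rr_nonneg
lemma rr_self : rr φ h h = 0 := by simp [rr]

section
variable (hah : a < h) (hφ : ∀ s ∈ Ioi a, HasDerivAt φ (φ' s) s)
  (hφpos : ∀ s ∈ Ioi a, 0 < φ' s)

include hφ in
lemma phi_contOn : ContinuousOn φ (Ioi a) :=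
  fun s hs => (hφ s hs).continuousAt.continuousWithinAt

include hφ hφpos in
lemma phi_sm : StrictMonoOn φ (Ioi a) := by
  apply strictMonoOn_of_deriv_pos (convex_Ioi a) (phi_contOn hφ)
  intro x hx
  rw [interior_Ioi] at hx
  rw [(hφ x hx).deriv]
  exact hφpos x hx

include hφ in
lemma rr_contOn : ContinuousOn (rr φ h) (Ioi a) := by
  apply Real.continuous_sqrt.comp_continuousOn
  have h1 : ContinuousOn (fun s => 2 * (φ s - φ h)) (Ioi a) :=
    continuousOn_const.mul ((phi_contOn hφ).sub continuousOn_const)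
  exact (Real.continuous_exp.comp_continuousOn h1).sub continuousOn_const

include hah hφ hφpos in
lemma rr_pos (hl : h < l) : 0 < rr φ h l := by
  have h1 : φ h < φ l := phi_sm hφ hφpos hah (lt_trans hah hl) hl
  apply Real.sqrt_pos.2
  have : (0:ℝ) < 2 * (φ l - φ h) := by linarith
  nlinarith [Real.exp_lt_exp.2 this, Real.exp_zero]

include hah hφ hφpos in
lemma gg_pos (hl : h < l) : 0 < gg φ h l := inv_pos.2 (rr_pos hah hφ hφpos hl)

include hah hφ hφpos in
lemma rr_mono : MonotoneOn (rr φ h) (Ici h) := by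
  intro x hx y hy hxy
  apply Real.sqrt_le_sqrt
  have : φ x ≤ φ y := (phi_sm hφ hφpos).monotoneOn
    (lt_of_lt_of_le hah hx) (lt_of_lt_of_le hah hy) hxy
  have := Real.exp_le_exp.2 (by linarith : 2 * (φ x - φ h) ≤ 2 * (φ y - φ h))
  linarith

include hah hφ hφpos in
lemma gg_anti : AntitoneOn (gg φ h) (Ioi h) := by
  intro x hx y hy hxy
  exact inv_anti₀ (rr_pos hah hφ hφpos hx)
    (rr_mono hah hφ hφpos (mem_Ici.2 (le_of_lt hx)) (mem_Ici.2 (le_of_lt (lt_of_lt_of_le hx hxy))) hxy)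

include hah hφ hφpos in
lemma gg_contOn : ContinuousOn (gg φ h) (Ioi h) := by
  apply ContinuousOn.inv₀ ((rr_contOn hφ).mono (Ioi_subset_Ioi hah.le))
  exact fun x hx => ne_of_gt (rr_pos hah hφ hφpos hx)

include hah hφ hφpos in
lemma rr_sq (hl : h ≤ l) : rr φ h l ^ 2 = Real.exp (2 * (φ l - φ h)) - 1 := by
  apply Real.sq_sqrt
  rcases eq_or_lt_of_le hl with rfl | hl
  · simp
  · have h1 : φ h < φ l := phi_sm hφ hφpos hah (lt_trans hah hl) hl
    nlinarith [Real.exp_le_exp.2 (by linarith : (0:ℝ) ≤ 2 * (φ l - φ h)), Real.exp_zero,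
      Real.one_le_exp (by linarith : (0:ℝ) ≤ 2 * (φ l - φ h))]

include hφ in
lemma psi_deriv (hl : a < l) : HasDerivAt (fun s => Real.exp (2 * (φ s - φ h)) - 1)
    (2 * φ' l * Real.exp (2 * (φ l - φ h))) l := by
  have h1 : HasDerivAt (fun s => 2 * (φ s - φ h)) (2 * φ' l) l :=
    (((hφ l hl).sub_const (φ h)).const_mul 2)
  have := (Real.hasDerivAt_exp (2 * (φ l - φ h))).comp l h1
  simpa [mul_comm] using this.sub_const 1

include hah hφ in
lemma rr_bounds (hε : 0 < ε) : ∃ δ > 0, ∀ l ∈ Ioo h (h + δ),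
    Real.sqrt ((2 * φ' h - ε) * (l - h)) ≤ rr φ h l ∧
    rr φ h l ≤ Real.sqrt ((2 * φ' h + ε) * (l - h)) := by
  have hD : HasDerivAt (fun s => Real.exp (2 * (φ s - φ h)) - 1) (2 * φ' h) h := by
    have := @psi_deriv a h h φ φ' hφ hah
    simpa using this
  have hslope := hasDerivAt_iff_tendsto_slope.1 hD
  have hev : ∀ᶠ l in 𝓝[>] h, |slope (fun s => Real.exp (2 * (φ s - φ h)) - 1) h l
      - 2 * φ' h| < ε := by
    have hm := hslope.mono_left (nhdsWithin_mono h (by intro x hx; exact ne_of_gt hx : Ioi h ⊆ {h}ᶜ))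
    exact hm.eventually (eventually_abs_sub_lt _ hε)
  rcases mem_nhdsGT_iff_exists_Ioo_subset.1 hev with ⟨u, hu, hsub⟩
  refine ⟨u - h, by simpa using hu, fun l hl => ?_⟩
  have hl' : l ∈ Ioo h u := by constructor <;> [exact hl.1; linarith [hl.2]]
  have hs := hsub hl'
  simp only [mem_setOf_eq, slope_def_field] at hs
  have hlh : 0 < l - h := by linarith [hl.1]
  have hψh : Real.exp (2 * (φ h - φ h)) - 1 = 0 := by simp
  rw [hψh] at hs
  have habs := abs_lt.1 hs
  have h1 : (2 * φ' h - ε) * (l - h) ≤ Real.exp (2 * (φ l - φ h)) - 1 := by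
    have := habs.1
    have hdiv : 2 * φ' h - ε < (Real.exp (2 * (φ l - φ h)) - 1) / (l - h) := by
      have : (Real.exp (2 * (φ l - φ h)) - 1 - 0) / (l - h) = (Real.exp (2 * (φ l - φ h)) - 1) / (l - h) := by ring_nf
      linarith [habs.1, this ▸ habs.1]
    calc (2 * φ' h - ε) * (l - h) ≤ ((Real.exp (2 * (φ l - φ h)) - 1) / (l - h)) * (l - h) := by
          apply mul_le_mul_of_nonneg_right hdiv.le hlh.le
      _ = Real.exp (2 * (φ l - φ h)) - 1 := by field_simp
  have h2 : Real.exp (2 * (φ l - φ h)) - 1 ≤ (2 * φ' h + ε) * (l - h) := by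
    have hdiv : (Real.exp (2 * (φ l - φ h)) - 1) / (l - h) < 2 * φ' h + ε := by
      have : (Real.exp (2 * (φ l - φ h)) - 1 - 0) / (l - h) = (Real.exp (2 * (φ l - φ h)) - 1) / (l - h) := by ring_nf
      linarith [habs.2, this ▸ habs.2]
    calc Real.exp (2 * (φ l - φ h)) - 1 = ((Real.exp (2 * (φ l - φ h)) - 1) / (l - h)) * (l - h) := by field_simp
      _ ≤ (2 * φ' h + ε) * (l - h) := mul_le_mul_of_nonneg_right hdiv.le hlh.le
  exact ⟨Real.sqrt_le_sqrt h1, Real.sqrt_le_sqrt h2⟩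

lemma sqrt_int_aux {c : ℝ} (hc : 0 < c) (hl : h < l) :
    IntegrableOn (fun s => (Real.sqrt (c * (s - h)))⁻¹) (Ioc h l) ∧
    ∫ s in Ioc h l, (Real.sqrt (c * (s - h)))⁻¹ = 2 * Real.sqrt (l - h) / Real.sqrt c := by
  have hfun : ∀ s ∈ Ioc h l, (fun s => (Real.sqrt c)⁻¹ * ((s - h) ^ (-(1/2) : ℝ))) s
      = (fun s => (Real.sqrt (c * (s - h)))⁻¹) s := by
    intro s hs
    have ht : (0:ℝ) < s - h := by linarith [hs.1]
    simp only []
    rw [Real.sqrt_mul hc.le, mul_inv]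
    congr 1
    rw [Real.sqrt_eq_rpow, ← Real.rpow_neg ht.le]
  have hii : IntervalIntegrable (fun s : ℝ => (s - h) ^ (-(1/2) : ℝ)) volume h l := by
    have h0 : IntervalIntegrable (fun s : ℝ => s ^ (-(1/2) : ℝ)) volume 0 (l - h) :=
      intervalIntegral.intervalIntegrable_rpow' (by norm_num)
    have := h0.comp_sub_right h
    simpa using this
  have hmeas : MeasurableSet (Ioc h l) := measurableSet_Ioc
  have hint : IntegrableOn (fun s => (Real.sqrt (c * (s - h)))⁻¹) (Ioc h l) := by
    apply (IntegrableOn.congr_fun _ hfun hmeas)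
    exact (hii.1.const_mul _)
  refine ⟨hint, ?_⟩
  rw [← MeasureTheory.setIntegral_congr_fun hmeas hfun]
  rw [MeasureTheory.integral_const_mul]
  have h1 : ∫ s in Ioc h l, (s - h) ^ (-(1/2) : ℝ) = ∫ s in h..l, (s - h) ^ (-(1/2) : ℝ) := by
    rw [intervalIntegral.integral_of_le hl.le]
  rw [h1]
  have h2 : ∫ s in h..l, (s - h) ^ (-(1/2) : ℝ) = ∫ t in (0:ℝ)..(l - h), t ^ (-(1/2) : ℝ) := by
    have := intervalIntegral.integral_comp_sub_right (a := h) (b := l)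
      (fun t : ℝ => t ^ (-(1/2) : ℝ)) h
    simpa using this
  rw [h2, integral_rpow (Or.inl (by norm_num))]
  have h0 : (0:ℝ) ^ ((-(1/2) : ℝ) + 1) = 0 := by
    rw [Real.zero_rpow (by norm_num)]
  rw [h0, Real.sqrt_eq_rpow, Real.sqrt_eq_rpow]
  norm_num
  ring

include hah hφ hφpos in
lemma gg_int (hl : h < l) : IntegrableOn (gg φ h) (Ioc h l) := by
  have hp : 0 < φ' h := hφpos h hah
  obtain ⟨δ, hδ, hbd⟩ := rr_bounds hah hφ (ε := φ' h) hp
  set m := min l (h + δ/2) with hm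
  have hhm : h < m := lt_min hl (by linarith)
  have hml : m ≤ l := min_le_left _ _
  have hIm : IntegrableOn (gg φ h) (Ioc h m) := by
    have hmaj := (sqrt_int_aux (c := φ' h) hp hhm).1
    apply Integrable.mono' hmaj
    · exact ((gg_contOn hah hφ hφpos).mono Ioc_subset_Ioi_self).aestronglyMeasurable
        measurableSet_Ioc
    · rw [ae_restrict_iff' measurableSet_Ioc]
      filter_upwards with s hs
      have hs1 : s ∈ Ioo h (h + δ) := ⟨hs.1, by
        have := hs.2; have := min_le_right l (h + δ/2); linarith [hs.2, hm]⟩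
      have hrr := (hbd s hs1).1
      have h2 : Real.sqrt ((2 * φ' h - φ' h) * (s - h)) = Real.sqrt (φ' h * (s - h)) := by
        ring_nf
      rw [h2] at hrr
      have hpos : 0 < Real.sqrt (φ' h * (s - h)) :=
        Real.sqrt_pos.2 (by nlinarith [hs1.1, hp] : (0:ℝ) < φ' h * (s - h))
      rw [Real.norm_of_nonneg gg_nonneg]
      exact inv_anti₀ hpos hrr
  have hIl : IntegrableOn (gg φ h) (Ioc m l) := by
    apply IntegrableOn.mono_set _ Ioc_subset_Icc_self
    exact ((gg_contOn hah hφ hφpos).mono (fun x hx => lt_of_lt_of_le hhm hx.1)).integrableOn_Icc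
  have := hIm.union hIl
  rwa [Ioc_union_Ioc_eq_Ioc hhm.le hml] at this

include hah hφ hφpos in
lemma int_Ioc_ge {l₁ l₂ : ℝ} (hl₁ : h ≤ l₁) (hl₂ : l₁ < l₂) :
    (l₂ - l₁) * gg φ h l₂ ≤ ∫ s in Ioc l₁ l₂, gg φ h s := by
  have hint : IntegrableOn (gg φ h) (Ioc l₁ l₂) :=
    (gg_int hah hφ hφpos (lt_of_le_of_lt hl₁ hl₂)).mono_set
      (Ioc_subset_Ioc_left hl₁)
  have h1 : ∫ s in Ioc l₁ l₂, (fun _ => gg φ h l₂) s ≤ ∫ s in Ioc l₁ l₂, gg φ h s := by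
    apply setIntegral_mono_on (integrableOn_const measure_Ioc_lt_top.ne) hint
      measurableSet_Ioc
    intro s hs
    exact gg_anti hah hφ hφpos (lt_of_le_of_lt hl₁ hs.1) (lt_of_le_of_lt hl₁ hl₂) hs.2
  rw [setIntegral_const, Real.volume_real_Ioc_of_le hl₂.le] at h1
  simpa using h1

include hah hφ hφpos in
lemma GG_pos (hl : h < l) : 0 < GG φ h l :=
  lt_of_lt_of_le (by nlinarith [gg_pos hah hφ hφpos hl]) (int_Ioc_ge hah hφ hφpos le_rfl hl)

include hah hφ hφpos in
lemma GG_add {l₁ l₂ : ℝ} (hl₁ : h < l₁) (hl₂ : l₁ ≤ l₂) :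
    GG φ h l₂ = GG φ h l₁ + ∫ s in Ioc l₁ l₂, gg φ h s := by
  unfold GG
  rw [← setIntegral_union (Set.Ioc_disjoint_Ioc_of_le le_rfl) measurableSet_Ioc
    (gg_int hah hφ hφpos hl₁)
    ((gg_int hah hφ hφpos (lt_of_lt_of_le hl₁ hl₂)).mono_set (Ioc_subset_Ioc_left hl₁.le)),
    Ioc_union_Ioc_eq_Ioc hl₁.le hl₂]

include hah hφ hφpos in
lemma GG_sm : StrictMonoOn (GG φ h) (Ioi h) := by
  intro l₁ hl₁ l₂ hl₂ hl
  rw [GG_add hah hφ hφpos hl₁ hl.le]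
  have := int_Ioc_ge hah hφ hφpos (le_of_lt hl₁) hl
  nlinarith [gg_pos hah hφ hφpos (lt_trans hl₁ hl)]

include hah hφ hφpos in
lemma GG_bounds (hε : 0 < ε) (hεp : ε ≤ φ' h) : ∃ δ > 0, ∀ l ∈ Ioo h (h + δ),
    2 * Real.sqrt (l - h) / Real.sqrt (2 * φ' h + ε) ≤ GG φ h l ∧
    GG φ h l ≤ 2 * Real.sqrt (l - h) / Real.sqrt (2 * φ' h - ε) := by
  have hp : 0 < φ' h := hφpos h hah
  obtain ⟨δ, hδ, hbd⟩ := rr_bounds hah hφ hε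
  refine ⟨δ, hδ, fun l hl => ?_⟩
  have hlh : h < l := hl.1
  have hc1 : (0:ℝ) < 2 * φ' h - ε := by linarith
  have hc2 : (0:ℝ) < 2 * φ' h + ε := by linarith
  have hgg := gg_int hah hφ hφpos hlh
  constructor
  · have hptw : ∀ s ∈ Ioc h l, (Real.sqrt ((2 * φ' h + ε) * (s - h)))⁻¹ ≤ gg φ h s := by
      intro s hs
      have hs' : s ∈ Ioo h (h + δ) := ⟨hs.1, lt_of_le_of_lt hs.2 hl.2⟩
      have := (hbd s hs').2
      exact inv_anti₀ (rr_pos hah hφ hφpos hs.1) this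
    have := setIntegral_mono_on (sqrt_int_aux hc2 hlh).1 hgg measurableSet_Ioc hptw
    rw [(sqrt_int_aux hc2 hlh).2] at this
    exact this
  · have hptw : ∀ s ∈ Ioc h l, gg φ h s ≤ (Real.sqrt ((2 * φ' h - ε) * (s - h)))⁻¹ := by
      intro s hs
      have hs' : s ∈ Ioo h (h + δ) := ⟨hs.1, lt_of_le_of_lt hs.2 hl.2⟩
      have := (hbd s hs').1
      have hpos : 0 < Real.sqrt ((2 * φ' h - ε) * (s - h)) :=
        Real.sqrt_pos.2 (by nlinarith [hs.1] : (0:ℝ) < (2 * φ' h - ε) * (s - h))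
      exact inv_anti₀ hpos this
    have := setIntegral_mono_on hgg (sqrt_int_aux hc1 hlh).1 measurableSet_Ioc hptw
    rw [(sqrt_int_aux hc1 hlh).2] at this
    exact this

include hah hφ hφpos in
lemma GG_tendsto_zero : Tendsto (GG φ h) (𝓝[>] h) (𝓝 0) := by
  have hp : 0 < φ' h := hφpos h hah
  obtain ⟨δ, hδ, hbd⟩ := GG_bounds hah hφ hφpos hp le_rfl
  apply squeeze_zero' (g := fun l => 2 * Real.sqrt (l - h) / Real.sqrt (2 * φ' h - φ' h))
  · filter_upwards [self_mem_nhdsWithin] with l hl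
    exact le_of_lt (GG_pos hah hφ hφpos hl)
  · have hev : Ioo h (h + δ) ∈ 𝓝[>] h :=
      mem_nhdsGT_iff_exists_Ioo_subset.2 ⟨h + δ, by simpa using hδ, subset_rfl⟩
    filter_upwards [hev] with l hl
    exact (hbd l hl).2
  · have : Tendsto (fun l : ℝ => 2 * Real.sqrt (l - h) / Real.sqrt (2 * φ' h - φ' h)) (𝓝 h)
        (𝓝 (2 * Real.sqrt (h - h) / Real.sqrt (2 * φ' h - φ' h))) := by
      apply Tendsto.div_const
      exact (continuous_const.mul (Real.continuous_sqrt.comp (continuous_id.sub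
        continuous_const))).tendsto h
    have h0 : 2 * Real.sqrt (h - h) / Real.sqrt (2 * φ' h - φ' h) = 0 := by simp
    rw [h0] at this
    exact this.mono_left nhdsWithin_le_nhds

include hah hφ hφpos in
lemma GG_deriv (hl : h < l) : HasDerivAt (GG φ h) (gg φ h l) l := by
  set m := (h + l) / 2 with hm
  have hhm : h < m := by simp only [hm]; linarith
  have hml : m < l := by simp only [hm]; linarith
  have hKey : ∀ x ∈ Ioi m, GG φ h x = GG φ h m + ∫ s in m..x, gg φ h s := by
    intro x hx
    rw [GG_add hah hφ hφpos hhm (le_of_lt hx), intervalIntegral.integral_of_le (le_of_lt hx)]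
  have hii : IntervalIntegrable (gg φ h) volume m l := by
    rw [intervalIntegrable_iff_integrableOn_Ioc_of_le hml.le]
    exact (gg_int hah hφ hφpos (lt_trans hhm hml)).mono_set (Ioc_subset_Ioc_left hhm.le)
  have hca : ContinuousAt (gg φ h) l :=
    (gg_contOn hah hφ hφpos).continuousAt (Ioi_mem_nhds hl)
  have hsm : StronglyMeasurableAtFilter (gg φ h) (𝓝 l) := by
    refine ⟨Ioi h, Ioi_mem_nhds hl, ?_⟩
    exact ((gg_contOn hah hφ hφpos).aestronglyMeasurable measurableSet_Ioi)
  have hD := intervalIntegral.integral_hasDerivAt_right hii hsm hca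
  have hD' : HasDerivAt (fun x => GG φ h m + ∫ s in m..x, gg φ h s) (gg φ h l) l :=
    hD.const_add _
  apply hD'.congr_of_eventuallyEq
  filter_upwards [Ioi_mem_nhds hml] with x hx
  exact hKey x hx

include hah hφ hφpos in
lemma GG_refl {l₁ l₂ : ℝ} (h₁ : h < l₁) (h₂ : h < l₂) (hG : GG φ h l₁ < GG φ h l₂) :
    l₁ < l₂ := by
  by_contra hc
  push_neg at hc
  exact absurd ((GG_sm hah hφ hφpos).monotoneOn h₂ h₁ hc) (not_le.2 hG)

section ext
variable {l₀ : ℝ} {v : ℝ → ℝ}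
variable (hl₀ : h < l₀)
  (hv2 : ∀ x : ℝ, x ≠ 0 → |x| < GG φ h l₀ → GG φ h (v x) = |x| ∧ v x ∈ Ioo h l₀)
  (hv0 : v 0 = h)

include hah hφ hφpos hl₀ hv2 in
lemma inv_cont {x : ℝ} (hx : x ∈ Ioo 0 (GG φ h l₀)) : ContinuousAt v x := by
  have hx0 : x ≠ 0 := ne_of_gt hx.1
  have hxa : |x| = x := abs_of_pos hx.1
  obtain ⟨hGv, hvm⟩ := hv2 x hx0 (by rw [hxa]; exact hx.2)
  rw [hxa] at hGv
  set l := v x with hl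
  apply tendsto_order.2
  constructor
  · intro b hb
    set b' := max b ((h + l) / 2) with hb'
    have hhb' : h < b' := lt_of_lt_of_le (by linarith [hvm.1] : h < (h + l) / 2)
      (le_max_right _ _)
    have hb'l : b' < l := max_lt hb (by linarith [hvm.1])
    have hGb' : GG φ h b' < x := by
      rw [← hGv]; exact GG_sm hah hφ hφpos hhb' hvm.1 hb'l
    have hev : Ioo (GG φ h b') (GG φ h l₀) ∈ 𝓝 x :=
      isOpen_Ioo.mem_nhds ⟨hGb', hx.2⟩
    filter_upwards [hev] with z hz
    have hz0 : z ≠ 0 := ne_of_gt (lt_trans (GG_pos hah hφ hφpos hhb') hz.1)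
    have hza : |z| = z := abs_of_pos (lt_trans (GG_pos hah hφ hφpos hhb') hz.1)
    obtain ⟨hGz, hzm⟩ := hv2 z hz0 (by rw [hza]; exact hz.2)
    rw [hza] at hGz
    have : b' < v z := by
      apply GG_refl hah hφ hφpos hhb' hzm.1
      rw [hGz]; exact hz.1
    exact lt_of_le_of_lt (le_max_left _ _) this
  · intro b hb
    set b'' := min b ((l + l₀) / 2) with hb''
    have hlb'' : l < b'' := lt_min hb (by linarith [hvm.2])
    have hb''l₀ : b'' < l₀ := lt_of_le_of_lt (min_le_right _ _) (by linarith [hvm.2])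
    have hhb'' : h < b'' := lt_trans hvm.1 hlb''
    have hGb'' : x < GG φ h b'' := by
      rw [← hGv]; exact GG_sm hah hφ hφpos hvm.1 hhb'' hlb''
    have hGb''Λ : GG φ h b'' < GG φ h l₀ := GG_sm hah hφ hφpos hhb'' hl₀ hb''l₀
    have hev : Ioo (0:ℝ) (GG φ h b'') ∈ 𝓝 x := isOpen_Ioo.mem_nhds ⟨hx.1, hGb''⟩
    filter_upwards [hev] with z hz
    have hz0 : z ≠ 0 := ne_of_gt hz.1
    have hza : |z| = z := abs_of_pos hz.1
    obtain ⟨hGz, hzm⟩ := hv2 z hz0 (by rw [hza]; exact lt_trans hz.2 hGb''Λ)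
    rw [hza] at hGz
    have : v z < b'' := by
      apply GG_refl hah hφ hφpos hzm.1 hhb''
      rw [hGz]; exact hz.2
    exact lt_of_lt_of_le this (min_le_left _ _)


include hah hφ hφpos hl₀ hv2 in
lemma inv_deriv {x : ℝ} (hx : x ∈ Ioo 0 (GG φ h l₀)) :
    HasDerivAt v (rr φ h (v x)) x := by
  have hx0 : x ≠ 0 := ne_of_gt hx.1
  have hxa : |x| = x := abs_of_pos hx.1
  obtain ⟨hGv, hvm⟩ := hv2 x hx0 (by rw [hxa]; exact hx.2)
  have hD : HasDerivAt (GG φ h) (gg φ h (v x)) (v x) := GG_deriv hah hφ hφpos hvm.1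
  have hne : gg φ h (v x) ≠ 0 := ne_of_gt (gg_pos hah hφ hφpos hvm.1)
  have hfg : ∀ᶠ y in 𝓝 x, GG φ h (v y) = y := by
    filter_upwards [isOpen_Ioo.mem_nhds hx] with y hy
    have hy0 : y ≠ 0 := ne_of_gt hy.1
    have hya : |y| = y := abs_of_pos hy.1
    obtain ⟨hGy, _⟩ := hv2 y hy0 (by rw [hya]; exact hy.2)
    rw [hya] at hGy; exact hGy
  have := HasDerivAt.of_local_left_inverse (inv_cont hah hφ hφpos hl₀ hv2 hx) hD hne hfg
  rw [gg, inv_inv] at this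
  exact this

include hah hφ hφpos hl₀ hv2 in
lemma inv_tendsto0 : Tendsto v (𝓝[≠] (0:ℝ)) (𝓝 h) := by
  have hΛ : 0 < GG φ h l₀ := GG_pos hah hφ hφpos hl₀
  have hbd : ∀ᶠ z in 𝓝[≠] (0:ℝ), ‖v z - h‖ ≤ |z| * rr φ h l₀ := by
    have hev : Ioo (-(GG φ h l₀)) (GG φ h l₀) ∈ 𝓝[≠] (0:ℝ) :=
      nhdsWithin_le_nhds (isOpen_Ioo.mem_nhds (by constructor <;> [linarith; linarith]))
    filter_upwards [hev, self_mem_nhdsWithin] with z hz hz0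
    have hza : |z| < GG φ h l₀ := abs_lt.2 hz
    obtain ⟨hGz, hzm⟩ := hv2 z hz0 hza
    have hge := int_Ioc_ge hah hφ hφpos (le_refl h) hzm.1
    have hGG : (v z - h) * gg φ h (v z) ≤ |z| := by rw [← hGz]; exact hge
    have hggp : 0 < gg φ h (v z) := gg_pos hah hφ hφpos hzm.1
    have hrrm : rr φ h (v z) ≤ rr φ h l₀ :=
      rr_mono hah hφ hφpos (le_of_lt hzm.1) (le_of_lt (lt_trans hzm.1 hzm.2)) (le_of_lt hzm.2)
    have h1 : v z - h ≤ |z| * rr φ h (v z) := by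
      have hrr : gg φ h (v z) * rr φ h (v z) = 1 := by
        rw [gg]; exact inv_mul_cancel₀ (ne_of_gt (rr_pos hah hφ hφpos hzm.1))
      calc v z - h = (v z - h) * (gg φ h (v z) * rr φ h (v z)) := by rw [hrr]; ring
        _ = ((v z - h) * gg φ h (v z)) * rr φ h (v z) := by ring
        _ ≤ |z| * rr φ h (v z) :=
            mul_le_mul_of_nonneg_right hGG rr_nonneg
    rw [Real.norm_of_nonneg (by linarith [hzm.1] : 0 ≤ v z - h)]
    exact le_trans h1 (mul_le_mul_of_nonneg_left hrrm (abs_nonneg z))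
  have htz : Tendsto (fun z : ℝ => |z| * rr φ h l₀) (𝓝[≠] (0:ℝ)) (𝓝 0) := by
    have : Tendsto (fun z : ℝ => |z| * rr φ h l₀) (𝓝 (0:ℝ)) (𝓝 (|(0:ℝ)| * rr φ h l₀)) :=
      (continuous_abs.mul continuous_const).tendsto 0
    simpa using this.mono_left nhdsWithin_le_nhds
  have := squeeze_zero_norm' hbd htz
  have h2 : Tendsto (fun z => (v z - h) + h) (𝓝[≠] (0:ℝ)) (𝓝 (0 + h)) :=
    this.add_const h
  simpa using h2

include hah hφ hφpos hl₀ hv2 hv0 in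
lemma inv_deriv0 : HasDerivAt v 0 0 := by
  rw [hasDerivAt_iff_tendsto_slope]
  have hΛ : 0 < GG φ h l₀ := GG_pos hah hφ hφpos hl₀
  have hbd : ∀ᶠ z in 𝓝[≠] (0:ℝ), ‖slope v 0 z‖ ≤ rr φ h (v z) := by
    have hev : Ioo (-(GG φ h l₀)) (GG φ h l₀) ∈ 𝓝[≠] (0:ℝ) :=
      nhdsWithin_le_nhds (isOpen_Ioo.mem_nhds (by constructor <;> [linarith; linarith]))
    filter_upwards [hev, self_mem_nhdsWithin] with z hz hz0
    have hza : |z| < GG φ h l₀ := abs_lt.2 hz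
    obtain ⟨hGz, hzm⟩ := hv2 z hz0 hza
    have hge := int_Ioc_ge hah hφ hφpos (le_refl h) hzm.1
    have hGG : (v z - h) * gg φ h (v z) ≤ |z| := by rw [← hGz]; exact hge
    have h1 : v z - h ≤ |z| * rr φ h (v z) := by
      have hrr : gg φ h (v z) * rr φ h (v z) = 1 := by
        rw [gg]; exact inv_mul_cancel₀ (ne_of_gt (rr_pos hah hφ hφpos hzm.1))
      calc v z - h = ((v z - h) * gg φ h (v z)) * rr φ h (v z) := by
            rw [mul_assoc, hrr]; ring
        _ ≤ |z| * rr φ h (v z) := mul_le_mul_of_nonneg_right hGG rr_nonneg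
    have hz0' : (0:ℝ) < |z| := abs_pos.2 hz0
    rw [slope_def_field]
    have : |v z - h| ≤ |z| * rr φ h (v z) := by
      rw [abs_of_nonneg (by linarith [hzm.1] : 0 ≤ v z - h)]; exact h1
    rw [Real.norm_eq_abs, sub_zero, abs_div, hv0]
    rw [div_le_iff₀ hz0']
    calc |v z - h| ≤ |z| * rr φ h (v z) := this
      _ = rr φ h (v z) * |z| := by ring
  have htz : Tendsto (fun z : ℝ => rr φ h (v z)) (𝓝[≠] (0:ℝ)) (𝓝 0) := by
    have hc : ContinuousAt (rr φ h) h := (rr_contOn hφ).continuousAt (Ioi_mem_nhds hah)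
    have := hc.tendsto.comp (inv_tendsto0 hah hφ hφpos hl₀ hv2)
    rwa [rr_self] at this
  exact squeeze_zero_norm' hbd htz


include hah hφ hφpos in
lemma rr_deriv (hl : h < l) : HasDerivAt (rr φ h)
    (φ' l * Real.exp (2 * (φ l - φ h)) / rr φ h l) l := by
  have hψ := @psi_deriv a h l φ φ' hφ (lt_trans hah hl)
  have hψpos : 0 < Real.exp (2 * (φ l - φ h)) - 1 :=
    Real.sqrt_pos.1 (rr_pos hah hφ hφpos hl)
  have hs := (Real.hasDerivAt_sqrt (ne_of_gt hψpos)).comp l hψ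
  have : rr φ h = fun s => Real.sqrt (Real.exp (2 * (φ s - φ h)) - 1) := rfl
  rw [this]
  refine hs.congr_deriv ?_
  simp only [rr]
  field_simp

include hah hφ hφpos hl₀ hv2 in
lemma inv_deriv2 {x : ℝ} (hx : x ∈ Ioo 0 (GG φ h l₀)) :
    HasDerivAt (fun z => rr φ h (v z)) (φ' (v x) * (1 + rr φ h (v x) ^ 2)) x := by
  have hx0 : x ≠ 0 := ne_of_gt hx.1
  have hxa : |x| = x := abs_of_pos hx.1
  obtain ⟨hGv, hvm⟩ := hv2 x hx0 (by rw [hxa]; exact hx.2)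
  have hD := (rr_deriv hah hφ hφpos hvm.1).comp x (inv_deriv hah hφ hφpos hl₀ hv2 hx)
  refine hD.congr_deriv ?_
  have hrrne : rr φ h (v x) ≠ 0 := ne_of_gt (rr_pos hah hφ hφpos hvm.1)
  rw [rr_sq hah hφ hφpos (le_of_lt hvm.1)]
  field_simp
  ring

include hah hφ hφpos hl₀ hv2 in
lemma inv_slope0 : Tendsto (fun z => rr φ h (v z) / |z|) (𝓝[≠] (0:ℝ)) (𝓝 (φ' h)) := by
  have hp : 0 < φ' h := hφpos h hah
  have hΛ : 0 < GG φ h l₀ := GG_pos hah hφ hφpos hl₀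
  rw [Metric.tendsto_nhds]
  intro ε hε
  set ε₁ := min ε (φ' h) with hε₁def
  have hε₁ : 0 < ε₁ := lt_min hε hp
  have hε₁p : ε₁ ≤ φ' h := min_le_right _ _
  have hε₁e : ε₁ ≤ ε := min_le_left _ _
  set c₁ := 2 * φ' h - ε₁ with hc₁def
  set c₂ := 2 * φ' h + ε₁ with hc₂def
  have hc₁ : 0 < c₁ := by simp only [hc₁def]; linarith
  have hc₂ : 0 < c₂ := by simp only [hc₂def]; linarith
  obtain ⟨δ₁, hδ₁, hbd₁⟩ := rr_bounds hah hφ hε₁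
  obtain ⟨δ₂, hδ₂, hbd₂⟩ := GG_bounds hah hφ hφpos hε₁ hε₁p
  set δ := min δ₁ δ₂ with hδdef
  have hδ : 0 < δ := lt_min hδ₁ hδ₂
  have hev1 : ∀ᶠ z in 𝓝[≠] (0:ℝ), |v z - h| < δ := by
    have := (inv_tendsto0 hah hφ hφpos hl₀ hv2).eventually (eventually_abs_sub_lt h hδ)
    exact this
  have hev2 : Ioo (-(GG φ h l₀)) (GG φ h l₀) ∈ 𝓝[≠] (0:ℝ) :=
    nhdsWithin_le_nhds (isOpen_Ioo.mem_nhds (by constructor <;> [linarith; linarith]))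
  filter_upwards [hev1, hev2, self_mem_nhdsWithin] with z hz1 hz2 hz0
  have hza : |z| < GG φ h l₀ := abs_lt.2 hz2
  obtain ⟨hGz, hzm⟩ := hv2 z hz0 hza
  set l := v z with hldef
  have hlh : h < l := hzm.1
  have ht : 0 < l - h := by linarith
  have hlδ : l < h + δ := by
    have := abs_lt.1 hz1
    linarith [this.2]
  have hl1 : l ∈ Ioo h (h + δ₁) := ⟨hlh, lt_of_lt_of_le hlδ (by linarith [min_le_left δ₁ δ₂])⟩
  have hl2 : l ∈ Ioo h (h + δ₂) := ⟨hlh, lt_of_lt_of_le hlδ (by linarith [min_le_right δ₁ δ₂])⟩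
  obtain ⟨hr1, hr2⟩ := hbd₁ l hl1
  obtain ⟨hG1, hG2⟩ := hbd₂ l hl2
  have hst : 0 < Real.sqrt (l - h) := Real.sqrt_pos.2 ht
  have hsc₁ : 0 < Real.sqrt c₁ := Real.sqrt_pos.2 hc₁
  have hsc₂ : 0 < Real.sqrt c₂ := Real.sqrt_pos.2 hc₂
  have hGpos : 0 < GG φ h l := GG_pos hah hφ hφpos hlh
  have hzabs : |z| = GG φ h l := hGz.symm
  have hupper : rr φ h l / |z| ≤ c₂ / 2 := by
    rw [hzabs]
    have h1 : rr φ h l / GG φ h l ≤ Real.sqrt (c₂ * (l - h)) / (2 * Real.sqrt (l - h) / Real.sqrt c₂) := by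
      apply div_le_div₀ (Real.sqrt_nonneg _) hr2 (by positivity) hG1
    calc rr φ h l / GG φ h l ≤ _ := h1
      _ = c₂ / 2 := by
          rw [Real.sqrt_mul hc₂.le, div_div_eq_mul_div,
            div_eq_div_iff (by positivity) (by norm_num : (2:ℝ) ≠ 0),
            show Real.sqrt c₂ * Real.sqrt (l - h) * Real.sqrt c₂ * 2
              = (Real.sqrt c₂ * Real.sqrt c₂) * (Real.sqrt (l - h) * 2) by ring,
            Real.mul_self_sqrt hc₂.le]
          ring
  have hlower : c₁ / 2 ≤ rr φ h l / |z| := by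
    rw [hzabs]
    have h1 : Real.sqrt (c₁ * (l - h)) / (2 * Real.sqrt (l - h) / Real.sqrt c₁) ≤ rr φ h l / GG φ h l := by
      apply div_le_div₀ rr_nonneg hr1 hGpos hG2
    calc c₁ / 2 = Real.sqrt (c₁ * (l - h)) / (2 * Real.sqrt (l - h) / Real.sqrt c₁) := by
          rw [Real.sqrt_mul hc₁.le, div_div_eq_mul_div,
            eq_comm,
            div_eq_div_iff (by positivity) (by norm_num : (2:ℝ) ≠ 0),
            show Real.sqrt c₁ * Real.sqrt (l - h) * Real.sqrt c₁ * 2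
              = (Real.sqrt c₁ * Real.sqrt c₁) * (Real.sqrt (l - h) * 2) by ring,
            Real.mul_self_sqrt hc₁.le]
          ring
      _ ≤ rr φ h l / GG φ h l := h1
  rw [Real.dist_eq, abs_lt]
  constructor
  · simp only [hc₁def] at hlower; linarith
  · simp only [hc₂def] at hupper; linarith


include hah hφ hφpos in
lemma ext_sol {l₀ : ℝ} (hl₀ : h < l₀) :
    ∃ v v' : ℝ → ℝ,
      (∀ x ∈ Ioo (-(GG φ h l₀)) (GG φ h l₀), HasDerivAt v (v' x) x) ∧
      (∀ x ∈ Ioo (-(GG φ h l₀)) (GG φ h l₀), HasDerivAt v' (φ' (v x) * (1 + v' x ^ 2)) x) ∧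
      (∀ x ∈ Ioo (-(GG φ h l₀)) (GG φ h l₀), v x ∈ Ioi a) ∧ v 0 = h ∧ v' 0 = 0 := by
  classical
  have hΛ : 0 < GG φ h l₀ := GG_pos hah hφ hφpos hl₀
  set W : ℝ → ℝ := fun y => Function.invFunOn (GG φ h) (Ioo h l₀) y with hW
  set v : ℝ → ℝ := fun x => if x = 0 then h else W |x| with hv
  set v' : ℝ → ℝ := fun x => if x < 0 then -(rr φ h (v x)) else rr φ h (v x) with hv'
  have hGcont : ∀ x ∈ Ioi h, ContinuousAt (GG φ h) x :=
    fun x hx => (GG_deriv hah hφ hφpos hx).continuousAt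
  have hsurj : ∀ y : ℝ, 0 < y → y < GG φ h l₀ → ∃ l ∈ Ioo h l₀, GG φ h l = y := by
    intro y hy hyΛ
    have hev1 := (GG_tendsto_zero hah hφ hφpos).eventually (gt_mem_nhds hy)
    have hev2 : Ioo h l₀ ∈ 𝓝[>] h := Ioo_mem_nhdsGT_of_mem ⟨le_refl h, hl₀⟩
    obtain ⟨l₁, hl₁y, hl₁m⟩ := (hev1.and hev2).exists
    have hcont : ContinuousOn (GG φ h) (Icc l₁ l₀) := fun x hx =>
      (hGcont x (lt_of_lt_of_le hl₁m.1 hx.1)).continuousWithinAt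
    have hy' : y ∈ Icc (GG φ h l₁) (GG φ h l₀) := ⟨le_of_lt hl₁y, le_of_lt hyΛ⟩
    obtain ⟨l, hlm, hlval⟩ := intermediate_value_Icc (le_of_lt hl₁m.2) hcont hy'
    refine ⟨l, ⟨lt_of_lt_of_le hl₁m.1 hlm.1, ?_⟩, hlval⟩
    rcases eq_or_lt_of_le hlm.2 with rfl | hlt
    · exact absurd hlval (by rw [hlval] at hyΛ; exact absurd hyΛ (lt_irrefl y))
    · exact hlt
  have hv2 : ∀ x : ℝ, x ≠ 0 → |x| < GG φ h l₀ → GG φ h (v x) = |x| ∧ v x ∈ Ioo h l₀ := by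
    intro x hx0 hxa
    have hax : 0 < |x| := abs_pos.2 hx0
    obtain ⟨l, hlm, hlval⟩ := hsurj |x| hax hxa
    have hex : ∃ l ∈ Ioo h l₀, GG φ h l = |x| := ⟨l, hlm, hlval⟩
    have h1 : v x = W |x| := by simp only [hv, if_neg hx0]
    rw [h1]
    exact ⟨Function.invFunOn_eq (f := GG φ h) hex, Function.invFunOn_mem (f := GG φ h) hex⟩
  have hv0 : v 0 = h := by simp only [hv, if_pos rfl]
  have hvneg : ∀ x, v (-x) = v x := by
    intro x
    simp only [hv, abs_neg, neg_eq_zero]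
  have hv'0 : v' 0 = 0 := by
    simp only [hv', if_neg (lt_irrefl (0:ℝ)), hv0, rr_self]
  refine ⟨v, v', ?_, ?_, ?_, hv0, hv'0⟩
  · intro x hx
    rcases lt_trichotomy x 0 with hx0 | hx0 | hx0
    · have hnx : -x ∈ Ioo 0 (GG φ h l₀) := ⟨by linarith, by linarith [hx.1]⟩
      have hD := inv_deriv hah hφ hφpos hl₀ hv2 hnx
      have hneg : HasDerivAt (fun z : ℝ => -z) (-1) x := by
        simpa using hasDerivAt_neg x
      have hc := hD.comp x hneg
      have hfun : (v ∘ fun z : ℝ => -z) = v := funext fun z => hvneg z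
      rw [hfun] at hc
      have hval : rr φ h (v (-x)) * (-1) = v' x := by
        rw [hvneg x]
        simp only [hv', if_pos hx0]
        ring
      rwa [hval] at hc
    · subst hx0
      rw [hv'0]
      exact inv_deriv0 hah hφ hφpos hl₀ hv2 hv0
    · have hx' : x ∈ Ioo 0 (GG φ h l₀) := ⟨hx0, hx.2⟩
      have hD := inv_deriv hah hφ hφpos hl₀ hv2 hx'
      have hval : rr φ h (v x) = v' x := by
        simp only [hv', if_neg (not_lt.2 (le_of_lt hx0))]
      rwa [hval] at hD
  · intro x hx
    rcases lt_trichotomy x 0 with hx0 | hx0 | hx0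
    · have hnx : -x ∈ Ioo 0 (GG φ h l₀) := ⟨by linarith, by linarith [hx.1]⟩
      have hD := inv_deriv2 hah hφ hφpos hl₀ hv2 hnx
      have hneg : HasDerivAt (fun z : ℝ => -z) (-1) x := by
        simpa using hasDerivAt_neg x
      have hc := hD.comp x hneg
      have hfun : ((fun z => rr φ h (v z)) ∘ fun z : ℝ => -z) = fun z => rr φ h (v z) :=
        funext fun z => by simp [hvneg z]
      rw [hfun] at hc
      have hc2 := hc.neg
      have hev : v' =ᶠ[𝓝 x] fun z => -(rr φ h (v z)) := by
        filter_upwards [isOpen_Iio.mem_nhds hx0] with z hz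
        simp only [hv', if_pos (mem_Iio.1 hz)]
      have hfinal := hc2.congr_of_eventuallyEq hev
      have hval : -(φ' (v (-x)) * (1 + rr φ h (v (-x)) ^ 2) * -1)
          = φ' (v x) * (1 + v' x ^ 2) := by
        rw [hvneg x]
        simp only [hv', if_pos hx0]
        ring
      rwa [hval] at hfinal
    · subst hx0
      have hgoal : φ' (v 0) * (1 + v' 0 ^ 2) = φ' h := by
        rw [hv0, hv'0]; norm_num
      rw [hgoal, hasDerivAt_iff_tendsto_slope]
      have hsl := inv_slope0 hah hφ hφpos hl₀ hv2
      apply hsl.congr'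
      filter_upwards [self_mem_nhdsWithin] with z hz
      have hz0 : z ≠ 0 := hz
      rw [slope_def_field, hv'0, sub_zero, sub_zero]
      rcases lt_or_gt_of_ne hz0 with hzn | hzp
      · simp only [hv', if_pos hzn]
        rw [abs_of_neg hzn, div_neg, neg_div]
      · simp only [hv', if_neg (not_lt.2 (le_of_lt hzp))]
        rw [abs_of_pos hzp]
    · have hx' : x ∈ Ioo 0 (GG φ h l₀) := ⟨hx0, hx.2⟩
      have hD := inv_deriv2 hah hφ hφpos hl₀ hv2 hx'
      have hev : v' =ᶠ[𝓝 x] fun z => rr φ h (v z) := by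
        filter_upwards [isOpen_Ioi.mem_nhds hx0] with z hz
        simp only [hv', if_neg (not_lt.2 (le_of_lt (mem_Ioi.1 hz)))]
      have hfinal := hD.congr_of_eventuallyEq hev
      have hval : φ' (v x) * (1 + rr φ h (v x) ^ 2) = φ' (v x) * (1 + v' x ^ 2) := by
        simp only [hv', if_neg (not_lt.2 (le_of_lt hx0))]
      rwa [hval] at hfinal
  · intro x hx
    rcases eq_or_ne x 0 with rfl | hx0
    · rw [hv0]; exact hah
    · have := (hv2 x hx0 (abs_lt.2 ⟨hx.1, hx.2⟩)).2
      exact lt_trans hah this.1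

end ext

/-- Explicit formula for the finite half-period: for `φ` C¹, strictly
increasing, unbounded above, with `e^{−φ}` integrable on `(h,∞)`, the maximal
solution of `u'' = φ'(u)(1+(u')²)`, `u 0 = h`, `u' 0 = 0` has maximal interval
`(−Λ_h, Λ_h)` with `Λ_h = ∫_h^∞ (e^{2(φ(λ)−φ(h))} − 1)^{−1/2} dλ`. -/
theorem stmt16 (a h Λ : ℝ) (hΛ : 0 < Λ) (ha : a < h)
    (φ φ' u u' : ℝ → ℝ)
    (hφ : ∀ s ∈ Ioi a, HasDerivAt φ (φ' s) s)
    (hφc : ContinuousOn φ' (Ioi a))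
    (hφpos : ∀ s ∈ Ioi a, 0 < φ' s)
    (htop : Tendsto φ atTop atTop)
    (hint : MeasureTheory.IntegrableOn (fun t => Real.exp (-φ t)) (Ioi h))
    (hu : ∀ x ∈ Ioo (-Λ) Λ, HasDerivAt u (u' x) x)
    (hode : ∀ x ∈ Ioo (-Λ) Λ, HasDerivAt u' (φ' (u x) * (1 + u' x ^ 2)) x)
    (hrange : ∀ x ∈ Ioo (-Λ) Λ, u x ∈ Ioi a)
    (hu0 : u 0 = h) (hu'0 : u' 0 = 0)
    (hmax : ∀ Λ' : ℝ, Λ < Λ' →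
      ¬ ∃ v v' : ℝ → ℝ,
          (∀ x ∈ Ioo (-Λ') Λ', HasDerivAt v (v' x) x) ∧
          (∀ x ∈ Ioo (-Λ') Λ', HasDerivAt v' (φ' (v x) * (1 + v' x ^ 2)) x) ∧
          (∀ x ∈ Ioo (-Λ') Λ', v x ∈ Ioi a) ∧ v 0 = h ∧ v' 0 = 0) :
    Λ = ∫ l in Ioi h, (Real.sqrt (Real.exp (2 * (φ l - φ h)) - 1))⁻¹ := by
  have hfeq : (fun l => (Real.sqrt (Real.exp (2 * (φ l - φ h)) - 1))⁻¹) = gg φ h := rfl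
  rw [hfeq]
  have hmem0 : (0:ℝ) ∈ Ioo (-Λ) Λ := ⟨by linarith, hΛ⟩
  have hsub : ∀ x ∈ Ioo (0:ℝ) Λ, x ∈ Ioo (-Λ) Λ := fun x hx => ⟨by linarith [hx.1], hx.2⟩
  -- u' strictly monotone, hence positive on (0, Λ)
  have hu'sm : StrictMonoOn u' (Ioo (-Λ) Λ) := by
    apply strictMonoOn_of_deriv_pos (convex_Ioo _ _)
      (fun t ht => (hode t ht).continuousAt.continuousWithinAt)
    intro t ht
    rw [interior_Ioo] at ht
    rw [(hode t ht).deriv]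
    have := hφpos (u t) (hrange t ht)
    nlinarith [sq_nonneg (u' t)]
  have hu'pos : ∀ x ∈ Ioo (0:ℝ) Λ, 0 < u' x := by
    intro x hx
    have := hu'sm hmem0 (hsub x hx) hx.1
    rwa [hu'0] at this
  -- energy identity
  have henergy : ∀ x ∈ Ico (0:ℝ) Λ, 1 + u' x ^ 2 = Real.exp (2 * (φ (u x) - φ h)) := by
    intro x hx
    rcases eq_or_lt_of_le hx.1 with rfl | hx0
    · simp [hu'0, hu0]
    · set E := fun z => Real.log (1 + u' z ^ 2) - 2 * φ (u z) with hE
      have hIcc : Icc (0:ℝ) x ⊆ Ioo (-Λ) Λ := fun t ht =>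
        ⟨by linarith [ht.1], lt_of_le_of_lt ht.2 hx.2⟩
      have hEd : ∀ t ∈ Icc (0:ℝ) x, HasDerivAt E 0 t := by
        intro t ht
        have htm := hIcc ht
        have hpos : (0:ℝ) < 1 + u' t ^ 2 := by positivity
        have h1 : HasDerivAt (fun z => 1 + u' z ^ 2)
            (2 * u' t * (φ' (u t) * (1 + u' t ^ 2))) t := by
          have := ((hode t htm).pow 2).const_add 1
          refine this.congr_deriv ?_
          push_cast
          ring
        have hlog := (Real.hasDerivAt_log (ne_of_gt hpos)).comp t h1
        have hφu := (hφ (u t) (hrange t htm)).comp t (hu t htm)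
        have hEt := hlog.sub (hφu.const_mul 2)
        refine hEt.congr_deriv ?_
        field_simp
        ring
      have hcont : ContinuousOn E (Icc 0 x) := fun t ht =>
        (hEd t ht).continuousAt.continuousWithinAt
      have := constant_of_has_deriv_right_zero hcont
        (fun t ht => (hEd t (mem_Icc_of_Ico ht)).hasDerivWithinAt) x
        (right_mem_Icc.2 (le_of_lt hx0))
      simp only [hE, hu0, hu'0] at this
      have hlog : Real.log (1 + u' x ^ 2) = 2 * (φ (u x) - φ h) := by
        have h0 : Real.log (1 + (0:ℝ) ^ 2) = 0 := by norm_num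
        rw [h0] at this
        linarith
      have hpos : (0:ℝ) < 1 + u' x ^ 2 := by positivity
      rw [← hlog, Real.exp_log hpos]
  have hu'eq : ∀ x ∈ Ioo (0:ℝ) Λ, u' x = rr φ h (u x) := by
    intro x hx
    have he := henergy x (mem_Ico.2 ⟨le_of_lt hx.1, hx.2⟩)
    have : rr φ h (u x) = Real.sqrt (u' x ^ 2) := by rw [rr, ← he]; ring_nf
    rw [this, Real.sqrt_sq (le_of_lt (hu'pos x hx))]
  have husm : StrictMonoOn u (Ico 0 Λ) := by
    apply strictMonoOn_of_deriv_pos (convex_Ico _ _)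
    · intro t ht
      exact (hu t ⟨by linarith [ht.1], ht.2⟩).continuousAt.continuousWithinAt
    · intro t ht
      rw [interior_Ico] at ht
      rw [(hu t (hsub t ht)).deriv]
      exact hu'pos t ht
  have hugt : ∀ x ∈ Ioo (0:ℝ) Λ, h < u x := by
    intro x hx
    have := husm (left_mem_Ico.2 hΛ) (mem_Ico.2 ⟨le_of_lt hx.1, hx.2⟩) hx.1
    rwa [hu0] at this
  -- G(u x) = x
  have hGu : ∀ x ∈ Ioo (0:ℝ) Λ, GG φ h (u x) = x := by
    intro x hx
    set F := fun z => GG φ h (u z) - z with hF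
    have hFd : ∀ t ∈ Ioo (0:ℝ) Λ, HasDerivAt F 0 t := by
      intro t ht
      have htm := hsub t ht
      have hGd := GG_deriv ha hφ hφpos (hugt t ht)
      have hGu' := hGd.comp t (hu t htm)
      have hid := hasDerivAt_id t
      have := hGu'.sub hid
      refine this.congr_deriv ?_
      rw [hu'eq t ht, gg, inv_mul_cancel₀ (ne_of_gt (rr_pos ha hφ hφpos (hugt t ht)))]
      ring
    have hFconst : ∀ x₁ ∈ Ioo (0:ℝ) x, F x = F x₁ := by
        intro x₁ hx₁
        have hsub2 : Icc x₁ x ⊆ Ioo (0:ℝ) Λ := fun t ht =>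
          ⟨lt_of_lt_of_le hx₁.1 ht.1, lt_of_le_of_lt ht.2 hx.2⟩
        have hcont : ContinuousOn F (Icc x₁ x) := fun t ht =>
          (hFd t (hsub2 ht)).continuousAt.continuousWithinAt
        exact constant_of_has_deriv_right_zero hcont
          (fun t ht => (hFd t (hsub2 (mem_Icc_of_Ico ht))).hasDerivWithinAt) x
          (right_mem_Icc.2 (le_of_lt hx₁.2))
    have hmemIoo : Ioo (0:ℝ) x ∈ 𝓝[>] (0:ℝ) := Ioo_mem_nhdsGT_of_mem ⟨le_refl _, hx.1⟩
    have hF0 : Tendsto F (𝓝[>] (0:ℝ)) (𝓝 0) := by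
      have huc : Tendsto u (𝓝[>] (0:ℝ)) (𝓝[>] h) := by
        rw [tendsto_nhdsWithin_iff]
        constructor
        · have := (hu 0 hmem0).continuousAt.tendsto
          rw [hu0] at this
          exact this.mono_left nhdsWithin_le_nhds
        · filter_upwards [hmemIoo] with z hz
          exact hugt z ⟨hz.1, lt_trans hz.2 hx.2⟩
      have hGG := (GG_tendsto_zero ha hφ hφpos).comp huc
      have hid : Tendsto (fun z : ℝ => z) (𝓝[>] (0:ℝ)) (𝓝 0) :=
        tendsto_id.mono_left nhdsWithin_le_nhds
      have := hGG.sub hid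
      simpa using this
    have hFc : Tendsto F (𝓝[>] (0:ℝ)) (𝓝 (F x)) := by
      apply Tendsto.congr' _ tendsto_const_nhds
      filter_upwards [hmemIoo] with z hz
      exact hFconst z hz
    have := tendsto_nhds_unique hFc hF0
    simp only [hF] at this
    linarith
  -- G is bounded by Λ
  have hGle : ∀ l ∈ Ioi h, GG φ h l ≤ Λ := by
    intro l hl
    by_contra hc
    push_neg at hc
    exact hmax (GG φ h l) hc (ext_sol ha hφ hφpos hl)
  -- integrability on Ioi h
  have hnorm : (fun s => ‖gg φ h s‖) = gg φ h := funext fun s => Real.norm_of_nonneg gg_nonneg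
  have hfi : ∀ i : ℝ, IntegrableOn (gg φ h) (Ioc h i) := by
    intro i
    rcases lt_or_ge h i with hi | hi
    · exact gg_int ha hφ hφpos hi
    · rw [Ioc_eq_empty (not_lt.2 hi)]
      exact integrableOn_empty
  have hIval : ∀ i : ℝ, h < i → ∫ s in h..i, gg φ h s = GG φ h i := by
    intro i hi
    rw [intervalIntegral.integral_of_le (le_of_lt hi)]
    rfl
  have hInt : IntegrableOn (gg φ h) (Ioi h) := by
    apply integrableOn_Ioi_of_intervalIntegral_norm_bounded Λ h hfi tendsto_id
    filter_upwards [eventually_gt_atTop h] with i hi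
    rw [show (fun s => ‖gg φ h s‖) = gg φ h from hnorm, hIval i hi]
    exact hGle i hi
  have hIle : ∫ s in Ioi h, gg φ h s ≤ Λ := by
    apply le_of_tendsto (intervalIntegral_tendsto_integral_Ioi h hInt tendsto_id)
    filter_upwards [eventually_gt_atTop h] with i hi
    simp only [id_eq]
    rw [hIval i hi]
    exact hGle i hi
  have hInn : 0 ≤ ∫ s in Ioi h, gg φ h s :=
    setIntegral_nonneg measurableSet_Ioi (fun s _ => gg_nonneg)
  refine le_antisymm ?_ hIle
  by_contra hc
  push_neg at hc
  set x := ((∫ s in Ioi h, gg φ h s) + Λ) / 2 with hxdef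
  have hxm : x ∈ Ioo (0:ℝ) Λ := ⟨by simp only [hxdef]; linarith, by simp only [hxdef]; linarith⟩
  have h1 : GG φ h (u x) = x := hGu x hxm
  have h2 : GG φ h (u x) ≤ ∫ s in Ioi h, gg φ h s := by
    apply setIntegral_mono_set hInt (ae_of_all _ fun s => gg_nonneg)
    exact HasSubset.Subset.eventuallyLE Ioc_subset_Ioi_self
  rw [h1] at h2
  have : (∫ s in Ioi h, gg φ h s) < x := by simp only [hxdef]; linarith
  linarith
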